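/- Let γ > 0, let g : [0,∞)² → [0,∞) be measurable with g(x,0) = 0 and |g(x,u) − g(x,v)| ≤ C|u − v| for all x, u, v ≥ 0 (some C > 0), and let J′ : [0,∞) → ℝ be Lipschitz continuous on every bounded interval [0, z₀]. For a nonnegative r ∈ L^{2,γ} define F(r)(x) := J′( ∫₀ˣ g(v, r(v)) dv ) · g(x, r(x)). Then F is locally Lipschitz on the positive cone of L^{2,γ}: for every R > 0 there exists K_R > 0 such that ‖F(r) − F(r̄)‖_{L^{2,γ}} ≤ K_R ‖r − r̄‖_{L^{2,γ}} for all nonnegative r, r̄ ∈ L^{2,γ} with ‖r‖_{L^{2,γ}} ≤ R and ‖r̄‖_{L^{2,γ}} ≤ R. -/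

import Mathlib

open MeasureTheory

/-- The `L^{2,γ}` norm of a function on `[0,∞)` (valued in `ℝ≥0∞`):
`‖f‖_{L^{2,γ}} = (∫₀^∞ |f(x)|² e^{γx} dx)^{1/2}`. -/
noncomputable def L2gammaNorm (γ : ℝ) (f : ℝ → ℝ) : ENNReal :=
  (∫⁻ x in Set.Ioi (0 : ℝ), ENNReal.ofReal (f x ^ 2 * Real.exp (γ * x))) ^ ((1 : ℝ) / 2)

open scoped ENNReal

lemma aux_ofReal_sq {a : ℝ} (ha : 0 ≤ a) :
    ENNReal.ofReal a ^ (2:ℝ) = ENNReal.ofReal (a ^ 2) := by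
  rw [show (2:ℝ) = ((2:ℕ):ℝ) by norm_num, ENNReal.rpow_natCast, ← ENNReal.ofReal_pow ha]

lemma L2_eq (γ : ℝ) (f : ℝ → ℝ) :
    L2gammaNorm γ f =
      (∫⁻ x in Set.Ioi (0:ℝ),
        ENNReal.ofReal (|f x| * Real.exp (γ * x / 2)) ^ (2:ℝ)) ^ ((1:ℝ)/2) := by
  unfold L2gammaNorm
  congr 1
  refine lintegral_congr fun x => ?_
  rw [aux_ofReal_sq (by positivity)]
  congr 1
  have h1 : γ * x / 2 + γ * x / 2 = γ * x := by ring
  rw [mul_pow, sq_abs, pow_two (Real.exp _), ← Real.exp_add, h1]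

lemma measF {f : ℝ → ℝ} (hf : Measurable f) (γ : ℝ) :
    Measurable (fun x => ENNReal.ofReal (|f x| * Real.exp (γ * x / 2))) := by
  apply Measurable.ennreal_ofReal
  exact hf.abs.mul (Real.measurable_exp.comp ((measurable_const.mul measurable_id).div_const 2))

lemma meas_rpow2 {F : ℝ → ℝ≥0∞} (hF : Measurable F) :
    Measurable fun x => F x ^ (2:ℝ) := by
  have h : (fun x => F x ^ (2:ℝ)) = fun x => F x ^ (2:ℕ) := by
    funext x; rw [← ENNReal.rpow_natCast]; norm_num
  rw [h]; exact hF.pow_const 2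

lemma pull_const (c : ℝ≥0∞) {F : ℝ → ℝ≥0∞} (hF : Measurable F) :
    (∫⁻ x in Set.Ioi (0:ℝ), (c * F x) ^ (2:ℝ)) ^ ((1:ℝ)/2)
      = c * (∫⁻ x in Set.Ioi (0:ℝ), F x ^ (2:ℝ)) ^ ((1:ℝ)/2) := by
  have h1 : ∀ x : ℝ, (c * F x) ^ (2:ℝ) = c ^ (2:ℝ) * F x ^ (2:ℝ) := fun x =>
    ENNReal.mul_rpow_of_nonneg _ _ (by norm_num)
  simp_rw [h1]
  rw [lintegral_const_mul _ (meas_rpow2 hF),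
    ENNReal.mul_rpow_of_nonneg _ _ (by norm_num : (0:ℝ) ≤ 1/2), ← ENNReal.rpow_mul]
  norm_num

lemma L2_mink (γ : ℝ) {φ f₁ f₂ : ℝ → ℝ} {a b : ℝ} (ha : 0 ≤ a) (hb : 0 ≤ b)
    (hf₁ : Measurable f₁) (hf₂ : Measurable f₂)
    (hnn₁ : ∀ x, 0 ≤ f₁ x) (hnn₂ : ∀ x, 0 ≤ f₂ x)
    (hbd : ∀ x ∈ Set.Ioi (0:ℝ), |φ x| ≤ a * f₁ x + b * f₂ x) :
    L2gammaNorm γ φ ≤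
      ENNReal.ofReal a * L2gammaNorm γ f₁ + ENNReal.ofReal b * L2gammaNorm γ f₂ := by
  have hm₁ : Measurable (fun x => ENNReal.ofReal (|f₁ x| * Real.exp (γ * x / 2))) := measF hf₁ γ
  have hm₂ : Measurable (fun x => ENNReal.ofReal (|f₂ x| * Real.exp (γ * x / 2))) := measF hf₂ γ
  set F₁ : ℝ → ℝ≥0∞ := fun x =>
    ENNReal.ofReal a * ENNReal.ofReal (|f₁ x| * Real.exp (γ * x / 2)) with hF₁
  set F₂ : ℝ → ℝ≥0∞ := fun x =>
    ENNReal.ofReal b * ENNReal.ofReal (|f₂ x| * Real.exp (γ * x / 2)) with hF₂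
  have hmF₁ : Measurable F₁ := measurable_const.mul hm₁
  have hmF₂ : Measurable F₂ := measurable_const.mul hm₂
  have key : ∀ x ∈ Set.Ioi (0:ℝ),
      ENNReal.ofReal (|φ x| * Real.exp (γ * x / 2)) ≤ (F₁ + F₂) x := by
    intro x hx
    have h1 : |φ x| * Real.exp (γ * x / 2) ≤ (a * f₁ x + b * f₂ x) * Real.exp (γ * x / 2) :=
      mul_le_mul_of_nonneg_right (hbd x hx) (Real.exp_nonneg _)
    refine le_trans (ENNReal.ofReal_le_ofReal h1) (le_of_eq ?_)
    have e1 : (a * f₁ x + b * f₂ x) * Real.exp (γ * x / 2)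
        = a * (|f₁ x| * Real.exp (γ * x / 2)) + b * (|f₂ x| * Real.exp (γ * x / 2)) := by
      rw [abs_of_nonneg (hnn₁ x), abs_of_nonneg (hnn₂ x)]; ring
    rw [e1, ENNReal.ofReal_add (by positivity) (by positivity),
      ENNReal.ofReal_mul ha, ENNReal.ofReal_mul hb]
    rfl
  calc L2gammaNorm γ φ
      = (∫⁻ x in Set.Ioi (0:ℝ),
          ENNReal.ofReal (|φ x| * Real.exp (γ * x / 2)) ^ (2:ℝ)) ^ ((1:ℝ)/2) := L2_eq γ φ
    _ ≤ (∫⁻ x in Set.Ioi (0:ℝ), ((F₁ + F₂) x) ^ (2:ℝ)) ^ ((1:ℝ)/2) := by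
        apply ENNReal.rpow_le_rpow _ (by norm_num)
        exact setLIntegral_mono (meas_rpow2 (hmF₁.add hmF₂))
          (fun x hx => ENNReal.rpow_le_rpow (key x hx) (by norm_num))
    _ ≤ (∫⁻ x in Set.Ioi (0:ℝ), F₁ x ^ (2:ℝ)) ^ ((1:ℝ)/2)
          + (∫⁻ x in Set.Ioi (0:ℝ), F₂ x ^ (2:ℝ)) ^ ((1:ℝ)/2) :=
        ENNReal.lintegral_Lp_add_le hmF₁.aemeasurable hmF₂.aemeasurable one_le_two
    _ = ENNReal.ofReal a * L2gammaNorm γ f₁ + ENNReal.ofReal b * L2gammaNorm γ f₂ := by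
        rw [hF₁, hF₂, pull_const _ hm₁, pull_const _ hm₂, ← L2_eq, ← L2_eq]

lemma L2_CS {γ : ℝ} (hγ : 0 < γ) {h : ℝ → ℝ} (hm : Measurable h) :
    ∫⁻ x in Set.Ioi (0:ℝ), ENNReal.ofReal |h x|
      ≤ L2gammaNorm γ h * ENNReal.ofReal (Real.sqrt γ⁻¹) := by
  have hpq : Real.HolderConjugate 2 2 := Real.HolderConjugate.two_two
  set u : ℝ → ℝ≥0∞ := fun x => ENNReal.ofReal (|h x| * Real.exp (γ * x / 2)) with hu
  set v : ℝ → ℝ≥0∞ := fun x => ENNReal.ofReal (Real.exp (-(γ * x / 2))) with hv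
  have hmu : Measurable u := measF hm γ
  have hmv : Measurable v := by
    apply Measurable.ennreal_ofReal
    exact Real.measurable_exp.comp ((measurable_const.mul measurable_id).div_const 2).neg
  have key : ∀ x : ℝ, ENNReal.ofReal |h x| = (u * v) x := by
    intro x
    have : |h x| = |h x| * Real.exp (γ * x / 2) * Real.exp (-(γ * x / 2)) := by
      rw [mul_assoc, ← Real.exp_add, add_neg_cancel, Real.exp_zero, mul_one]
    rw [this, ENNReal.ofReal_mul (by positivity)]
    rfl
  have hv2 : ∫⁻ x in Set.Ioi (0:ℝ), v x ^ (2:ℝ) = ENNReal.ofReal γ⁻¹ := by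
    have e1 : ∀ x : ℝ, v x ^ (2:ℝ) = ENNReal.ofReal (Real.exp (-γ * x)) := by
      intro x
      rw [hv]
      rw [aux_ofReal_sq (Real.exp_nonneg _), pow_two, ← Real.exp_add]
      congr 2
      ring
    simp_rw [e1]
    rw [← ofReal_integral_eq_lintegral_ofReal (exp_neg_integrableOn_Ioi 0 hγ)
      (ae_of_all _ fun x => Real.exp_nonneg _)]
    congr 1
    have h2 := integral_comp_mul_left_Ioi (fun x => Real.exp (-x)) 0 hγ
    simp only [mul_zero, neg_mul] at h2 ⊢
    rw [h2, integral_exp_neg_Ioi_zero, smul_eq_mul, mul_one]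
  calc ∫⁻ x in Set.Ioi (0:ℝ), ENNReal.ofReal |h x|
      = ∫⁻ x in Set.Ioi (0:ℝ), (u * v) x := lintegral_congr key
    _ ≤ (∫⁻ x in Set.Ioi (0:ℝ), u x ^ (2:ℝ)) ^ ((1:ℝ)/2)
          * (∫⁻ x in Set.Ioi (0:ℝ), v x ^ (2:ℝ)) ^ ((1:ℝ)/2) := by
        have := ENNReal.lintegral_mul_le_Lp_mul_Lq
          ((volume : Measure ℝ).restrict (Set.Ioi 0)) hpq hmu.aemeasurable hmv.aemeasurable
        simpa [one_div] using this
    _ = L2gammaNorm γ h * ENNReal.ofReal (Real.sqrt γ⁻¹) := by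
        rw [hv2, ← L2_eq, ENNReal.ofReal_rpow_of_nonneg (by positivity) (by norm_num),
          Real.sqrt_eq_rpow]

lemma integrableOn_of_lin_fin {h : ℝ → ℝ} (hm : Measurable h)
    (hfin : ∫⁻ x in Set.Ioi (0:ℝ), ENNReal.ofReal |h x| < ⊤) :
    IntegrableOn h (Set.Ioi 0) volume := by
  refine ⟨hm.aestronglyMeasurable, ?_⟩
  rw [hasFiniteIntegral_iff_norm]
  simpa [Real.norm_eq_abs] using hfin

lemma L2_abs (γ : ℝ) (f : ℝ → ℝ) :
    L2gammaNorm γ (fun x => |f x|) = L2gammaNorm γ f := by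
  simp only [L2gammaNorm, sq_abs]

/-- The drift transformation `F(r)(x) = J′(∫₀ˣ g(v, r(v)) dv) · g(x, r(x))`. -/
noncomputable def driftMap (g : ℝ → ℝ → ℝ) (J' : ℝ → ℝ) (r : ℝ → ℝ) (x : ℝ) : ℝ :=
  J' (∫ v in (0 : ℝ)..x, g v (r v)) * g x (r x)

/-- If `J′` is Lipschitz on every bounded interval `[0, z₀]` and `g` is nonnegative,
vanishes at `y = 0` and is `C`-Lipschitz in its second variable, then `F` is locally
Lipschitz on the positive cone of `L^{2,γ}`. -/
theorem drift_locally_lipschitz (γ C : ℝ) (hγ : 0 < γ) (hC : 0 < C)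
    (g : ℝ → ℝ → ℝ) (hgmeas : Measurable (Function.uncurry g))
    (hg0 : ∀ x : ℝ, 0 ≤ x → g x 0 = 0)
    (hgnn : ∀ x y : ℝ, 0 ≤ x → 0 ≤ y → 0 ≤ g x y)
    (hgLip : ∀ x u v : ℝ, 0 ≤ x → 0 ≤ u → 0 ≤ v → |g x u - g x v| ≤ C * |u - v|)
    (J' : ℝ → ℝ)
    (hJLip : ∀ z₀ : ℝ, 0 < z₀ → ∃ K : NNReal, LipschitzOnWith K J' (Set.Icc 0 z₀)) :
    ∀ R : ℝ, 0 < R → ∃ K : ℝ, 0 < K ∧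
      ∀ r rb : ℝ → ℝ, Measurable r → Measurable rb →
        (∀ x, 0 ≤ r x) → (∀ x, 0 ≤ rb x) →
        L2gammaNorm γ r ≤ ENNReal.ofReal R → L2gammaNorm γ rb ≤ ENNReal.ofReal R →
        L2gammaNorm γ (fun x => driftMap g J' r x - driftMap g J' rb x) ≤
          ENNReal.ofReal K * L2gammaNorm γ (fun x => r x - rb x) := by
  intro R hR
  set S : ℝ := Real.sqrt γ⁻¹ with hSdef
  have hS : 0 ≤ S := Real.sqrt_nonneg _
  set z₀ : ℝ := C * (R * S) + 1 with hz₀def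
  have hz₀ : 0 < z₀ := by positivity
  obtain ⟨KJ, hKJ⟩ := hJLip z₀ hz₀
  set M : ℝ := |J' 0| + (KJ : ℝ) * z₀ with hMdef
  have hM : 0 ≤ M := by positivity
  refine ⟨(KJ : ℝ) * C ^ 2 * S * R + M * C + 1, by positivity, ?_⟩
  intro r rb hr hrb hrnn hrbnn hrR hrbR
  -- measurability of v ↦ g v (q v)
  have gqmeas : ∀ q : ℝ → ℝ, Measurable q → Measurable (fun v => g v (q v)) := fun q hq =>
    hgmeas.comp (measurable_id.prodMk hq)
  -- basic facts for any admissible q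
  have hQ : ∀ q : ℝ → ℝ, Measurable q → (∀ x, 0 ≤ q x) → L2gammaNorm γ q ≤ ENNReal.ofReal R →
      (∫⁻ v in Set.Ioi (0:ℝ), ENNReal.ofReal |q v| ≤ ENNReal.ofReal (R * S)) ∧
      IntegrableOn (fun v => g v (q v)) (Set.Ioi 0) volume ∧
      IntegrableOn q (Set.Ioi 0) volume ∧
      (∀ x ∈ Set.Ioi (0:ℝ), (∫ v in (0:ℝ)..x, g v (q v)) ∈ Set.Icc 0 z₀) := by
    intro q hq hqnn hqR
    have hq1 : ∫⁻ v in Set.Ioi (0:ℝ), ENNReal.ofReal |q v| ≤ ENNReal.ofReal (R * S) := by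
      refine le_trans (L2_CS hγ hq) ?_
      rw [ENNReal.ofReal_mul hR.le]
      exact mul_le_mul_left hqR _
    have hqInt : IntegrableOn q (Set.Ioi 0) volume :=
      integrableOn_of_lin_fin hq (lt_of_le_of_lt hq1 ENNReal.ofReal_lt_top)
    have hgq_lin : ∫⁻ v in Set.Ioi (0:ℝ), ENNReal.ofReal |g v (q v)|
        ≤ ENNReal.ofReal (C * (R * S)) := by
      calc ∫⁻ v in Set.Ioi (0:ℝ), ENNReal.ofReal |g v (q v)|
          ≤ ∫⁻ v in Set.Ioi (0:ℝ), ENNReal.ofReal (C * |q v|) := by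
            refine setLIntegral_mono ((hq.abs.const_mul C).ennreal_ofReal) fun v hv => ?_
            refine ENNReal.ofReal_le_ofReal ?_
            have := hgLip v (q v) 0 (le_of_lt hv) (hqnn v) le_rfl
            rw [hg0 v (le_of_lt hv), sub_zero, sub_zero] at this
            exact this
        _ = ENNReal.ofReal C * ∫⁻ v in Set.Ioi (0:ℝ), ENNReal.ofReal |q v| := by
            simp_rw [ENNReal.ofReal_mul hC.le]
            exact lintegral_const_mul _ (hq.abs.ennreal_ofReal)
        _ ≤ ENNReal.ofReal C * ENNReal.ofReal (R * S) := mul_le_mul_right hq1 _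
        _ = ENNReal.ofReal (C * (R * S)) := (ENNReal.ofReal_mul hC.le).symm
    have hgqInt : IntegrableOn (fun v => g v (q v)) (Set.Ioi 0) volume :=
      integrableOn_of_lin_fin (gqmeas q hq) (lt_of_le_of_lt hgq_lin ENNReal.ofReal_lt_top)
    refine ⟨hq1, hgqInt, hqInt, ?_⟩
    intro x hx
    rw [Set.mem_Ioi] at hx
    rw [intervalIntegral.integral_of_le hx.le]
    have hnn' : ∀ v ∈ Set.Ioc (0:ℝ) x, 0 ≤ g v (q v) := fun v hv =>
      hgnn v (q v) hv.1.le (hqnn v)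
    constructor
    · exact setIntegral_nonneg measurableSet_Ioc hnn'
    · have hmono : ∫ v in Set.Ioc (0:ℝ) x, g v (q v) ≤ ∫ v in Set.Ioi (0:ℝ), g v (q v) := by
        refine setIntegral_mono_set hgqInt ?_ (HasSubset.Subset.eventuallyLE Set.Ioc_subset_Ioi_self)
        exact (ae_restrict_iff' measurableSet_Ioi).2 (ae_of_all _ fun v hv =>
          hgnn v (q v) (le_of_lt hv) (hqnn v))
      refine le_trans hmono ?_
      have heq : ∫ v in Set.Ioi (0:ℝ), g v (q v)
          = (∫⁻ v in Set.Ioi (0:ℝ), ENNReal.ofReal (g v (q v))).toReal := by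
        refine integral_eq_lintegral_of_nonneg_ae ?_ (gqmeas q hq).aestronglyMeasurable
        exact (ae_restrict_iff' measurableSet_Ioi).2 (ae_of_all _ fun v hv =>
          hgnn v (q v) (le_of_lt hv) (hqnn v))
      rw [heq]
      have hle2 : ∫⁻ v in Set.Ioi (0:ℝ), ENNReal.ofReal (g v (q v))
          ≤ ENNReal.ofReal (C * (R * S)) := by
        refine le_trans (lintegral_mono fun v => ENNReal.ofReal_le_ofReal (le_abs_self _)) hgq_lin
      have := ENNReal.toReal_le_of_le_ofReal (by positivity) hle2
      rw [hz₀def]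
      linarith
  obtain ⟨hr1, hgrInt, hrInt, hImem_r⟩ := hQ r hr hrnn hrR
  obtain ⟨hrb1, hgrbInt, hrbInt, hImem_rb⟩ := hQ rb hrb hrbnn hrbR
  -- the L² norm of the difference and the L¹ quantity D
  set Δ : ℝ → ℝ := fun x => r x - rb x with hΔdef
  have hΔmeas : Measurable Δ := hr.sub hrb
  set Dlin : ℝ≥0∞ := ∫⁻ x in Set.Ioi (0:ℝ), ENNReal.ofReal |Δ x| with hDdef
  have hDle : Dlin ≤ L2gammaNorm γ Δ * ENNReal.ofReal S := L2_CS hγ hΔmeas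
  have hΔtri : L2gammaNorm γ Δ ≤ ENNReal.ofReal (2 * R) := by
    have h1 : ∀ x ∈ Set.Ioi (0:ℝ), |Δ x| ≤ 1 * r x + 1 * rb x := by
      intro x _
      rw [one_mul, one_mul, hΔdef]
      refine le_trans (abs_sub _ _) ?_
      rw [abs_of_nonneg (hrnn x), abs_of_nonneg (hrbnn x)]
    refine le_trans (L2_mink γ zero_le_one zero_le_one hr hrb hrnn hrbnn h1) ?_
    simp only [ENNReal.ofReal_one, one_mul]
    calc L2gammaNorm γ r + L2gammaNorm γ rb ≤ ENNReal.ofReal R + ENNReal.ofReal R :=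
          add_le_add hrR hrbR
      _ = ENNReal.ofReal (2 * R) := by rw [← ENNReal.ofReal_add hR.le hR.le]; ring_nf
  have hDfin : Dlin ≠ ⊤ := by
    refine ne_top_of_le_ne_top ?_ (le_trans hDle (mul_le_mul_left hΔtri _))
    exact ENNReal.mul_ne_top ENNReal.ofReal_ne_top ENNReal.ofReal_ne_top
  set Dr : ℝ := Dlin.toReal with hDrdef
  have hDr : 0 ≤ Dr := ENNReal.toReal_nonneg
  have hΔint : IntegrableOn Δ (Set.Ioi 0) volume := hrInt.sub hrbInt
  have hΔL1 : ∫ x in Set.Ioi (0:ℝ), |Δ x| = Dr := by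
    rw [hDrdef, hDdef]
    exact integral_eq_lintegral_of_nonneg_ae (ae_of_all _ fun x => abs_nonneg _)
      hΔmeas.abs.aestronglyMeasurable
  -- bound on the difference of the inner integrals
  have hIdiff : ∀ x ∈ Set.Ioi (0:ℝ),
      |(∫ v in (0:ℝ)..x, g v (r v)) - ∫ v in (0:ℝ)..x, g v (rb v)| ≤ C * Dr := by
    intro x hx
    rw [Set.mem_Ioi] at hx
    rw [intervalIntegral.integral_of_le hx.le, intervalIntegral.integral_of_le hx.le]
    have hIr' : IntegrableOn (fun v => g v (r v)) (Set.Ioc 0 x) volume :=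
      hgrInt.mono_set Set.Ioc_subset_Ioi_self
    have hIrb' : IntegrableOn (fun v => g v (rb v)) (Set.Ioc 0 x) volume :=
      hgrbInt.mono_set Set.Ioc_subset_Ioi_self
    rw [← integral_sub hIr' hIrb']
    calc |∫ v in Set.Ioc (0:ℝ) x, (g v (r v) - g v (rb v))|
        ≤ ∫ v in Set.Ioc (0:ℝ) x, |g v (r v) - g v (rb v)| := by
          simpa [Real.norm_eq_abs] using
            norm_integral_le_integral_norm (μ := volume.restrict (Set.Ioc 0 x))
              (fun v => g v (r v) - g v (rb v))
      _ ≤ ∫ v in Set.Ioc (0:ℝ) x, C * |Δ v| := by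
          have habsInt : IntegrableOn (fun v => |Δ v|) (Set.Ioc 0 x) volume :=
            IntegrableOn.mono_set hΔint.abs Set.Ioc_subset_Ioi_self
          refine setIntegral_mono_on (hIr'.sub hIrb').abs (habsInt.const_mul C)
            measurableSet_Ioc fun v hv => ?_
          exact hgLip v (r v) (rb v) hv.1.le (hrnn v) (hrbnn v)
      _ = C * ∫ v in Set.Ioc (0:ℝ) x, |Δ v| := integral_const_mul C _
      _ ≤ C * ∫ v in Set.Ioi (0:ℝ), |Δ v| := by
          refine mul_le_mul_of_nonneg_left ?_ hC.le
          refine setIntegral_mono_set hΔint.abs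
            (ae_of_all _ fun v => abs_nonneg _)
            (HasSubset.Subset.eventuallyLE Set.Ioc_subset_Ioi_self)
      _ = C * Dr := by rw [hΔL1]
  -- the pointwise bound
  have hpt : ∀ x ∈ Set.Ioi (0:ℝ),
      |driftMap g J' r x - driftMap g J' rb x|
        ≤ ((KJ : ℝ) * C ^ 2 * Dr) * r x + (M * C) * |Δ x| := by
    intro x hx
    have hx' : (0:ℝ) < x := hx
    set A : ℝ := J' (∫ v in (0:ℝ)..x, g v (r v)) with hA
    set B : ℝ := J' (∫ v in (0:ℝ)..x, g v (rb v)) with hB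
    set u : ℝ := g x (r x) with hu
    set v : ℝ := g x (rb x) with hv
    have hmemr := hImem_r x hx
    have hmemrb := hImem_rb x hx
    have hdistAB : |A - B| ≤ (KJ : ℝ) * (C * Dr) := by
      have h1 := (lipschitzOnWith_iff_dist_le_mul.mp hKJ) _ hmemr _ hmemrb
      rw [Real.dist_eq, Real.dist_eq] at h1
      exact le_trans h1 (mul_le_mul_of_nonneg_left (hIdiff x hx) KJ.2)
    have hB_le : |B| ≤ M := by
      have h1 := (lipschitzOnWith_iff_dist_le_mul.mp hKJ) _ hmemrb _
        (Set.left_mem_Icc.2 hz₀.le)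
      rw [Real.dist_eq, Real.dist_eq, sub_zero] at h1
      have h2 : |(∫ v in (0:ℝ)..x, g v (rb v))| ≤ z₀ := by
        rw [abs_of_nonneg hmemrb.1]; exact hmemrb.2
      calc |B| ≤ |B - J' 0| + |J' 0| := by
            have := abs_add_le (B - J' 0) (J' 0); simpa using this
        _ ≤ (KJ : ℝ) * z₀ + |J' 0| := by
            refine add_le_add (le_trans h1 ?_) le_rfl
            exact mul_le_mul_of_nonneg_left h2 KJ.2
        _ = M := by rw [hMdef]; ring
    have hu_le : |u| ≤ C * r x := by
      have h1 := hgLip x (r x) 0 hx'.le (hrnn x) le_rfl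
      rw [hg0 x hx'.le, sub_zero, sub_zero, abs_of_nonneg (hrnn x)] at h1
      exact h1
    have huv : |u - v| ≤ C * |Δ x| := hgLip x (r x) (rb x) hx'.le (hrnn x) (hrbnn x)
    have hsplit : driftMap g J' r x - driftMap g J' rb x = (A - B) * u + B * (u - v) := by
      simp only [driftMap, ← hA, ← hB, ← hu, ← hv]; ring
    rw [hsplit]
    calc |(A - B) * u + B * (u - v)| ≤ |A - B| * |u| + |B| * |u - v| := by
          refine le_trans (abs_add_le _ _) ?_
          rw [abs_mul, abs_mul]
      _ ≤ ((KJ : ℝ) * (C * Dr)) * (C * r x) + M * (C * |Δ x|) := by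
          refine add_le_add (mul_le_mul hdistAB hu_le (abs_nonneg _) (by positivity))
            (mul_le_mul hB_le huv (abs_nonneg _) hM)
      _ = ((KJ : ℝ) * C ^ 2 * Dr) * r x + (M * C) * |Δ x| := by ring
  -- put everything together
  have hmain := L2_mink γ (by positivity : (0:ℝ) ≤ (KJ : ℝ) * C ^ 2 * Dr)
    (by positivity : (0:ℝ) ≤ M * C) hr hΔmeas.abs hrnn (fun x => abs_nonneg _) hpt
  rw [L2_abs] at hmain
  refine le_trans hmain ?_
  have hterm1 : ENNReal.ofReal ((KJ : ℝ) * C ^ 2 * Dr) * L2gammaNorm γ r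
      ≤ ENNReal.ofReal ((KJ : ℝ) * C ^ 2 * S * R) * L2gammaNorm γ Δ := by
    have e1 : ENNReal.ofReal ((KJ : ℝ) * C ^ 2 * Dr)
        = ENNReal.ofReal ((KJ : ℝ) * C ^ 2) * Dlin := by
      rw [ENNReal.ofReal_mul (by positivity), ENNReal.ofReal_toReal hDfin]
    calc ENNReal.ofReal ((KJ : ℝ) * C ^ 2 * Dr) * L2gammaNorm γ r
        ≤ ENNReal.ofReal ((KJ : ℝ) * C ^ 2) * Dlin * ENNReal.ofReal R := by
          rw [e1]; exact mul_le_mul_right hrR _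
      _ ≤ ENNReal.ofReal ((KJ : ℝ) * C ^ 2) * (L2gammaNorm γ Δ * ENNReal.ofReal S)
            * ENNReal.ofReal R := by
          exact mul_le_mul_left (mul_le_mul_right hDle _) _
      _ = ENNReal.ofReal ((KJ : ℝ) * C ^ 2) * ENNReal.ofReal S * ENNReal.ofReal R
            * L2gammaNorm γ Δ := by ring
      _ = ENNReal.ofReal ((KJ : ℝ) * C ^ 2 * S * R) * L2gammaNorm γ Δ := by
          rw [← ENNReal.ofReal_mul (by positivity), ← ENNReal.ofReal_mul (by positivity)]
  calc ENNReal.ofReal ((KJ : ℝ) * C ^ 2 * Dr) * L2gammaNorm γ r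
        + ENNReal.ofReal (M * C) * L2gammaNorm γ Δ
      ≤ ENNReal.ofReal ((KJ : ℝ) * C ^ 2 * S * R) * L2gammaNorm γ Δ
        + ENNReal.ofReal (M * C) * L2gammaNorm γ Δ := add_le_add hterm1 le_rfl
    _ = ENNReal.ofReal ((KJ : ℝ) * C ^ 2 * S * R + M * C) * L2gammaNorm γ Δ := by
        rw [ENNReal.ofReal_add (by positivity) (by positivity)]
        exact (add_mul _ _ _).symm
    _ ≤ ENNReal.ofReal ((KJ : ℝ) * C ^ 2 * S * R + M * C + 1) * L2gammaNorm γ Δ := by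
        exact mul_le_mul_left (ENNReal.ofReal_le_ofReal (by linarith)) _
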